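/- Let V = (v_1,v_2,...) be an enumeration of ℚ² ∩ [0,1]², let b̄ be the 2-Toeplitz sequence associated with V, and let ā ∈ [0,1]^ℕ be the sequence obtained from b̄ by replacing each pair v ∈ [0,1]² by its two coordinates as consecutive terms. Then for every c, d ∈ [0,1], the sequence (c,d,a_1,a_2,...) ∈ [0,1]^ℕ is minimal. -/

import Mathlib

open Set unitInterval

open Topology Filter

/-- The left shift `S` on sequences: `S(x₁,x₂,x₃,…) = (x₂,x₃,…)`. -/
def shiftSeq {X : Type*} (z : ℕ → X) : ℕ → X := fun n => z (n + 1)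

/-- The closure of the forward shift-orbit `{z, Sz, S²z, …}` of a sequence `z`,
inside the sequence space `ℕ → X`.  (For a compact metric space `X` the product
topology on `ℕ → X` is exactly the topology of the metric
`d̄(x̄,ȳ) = ∑ᵢ d(xᵢ,yᵢ)/2ⁱ`.) -/
def shiftOrbitClosure {X : Type*} [TopologicalSpace X] (z : ℕ → X) : Set (ℕ → X) :=
  closure (Set.range fun k => shiftSeq^[k] z)

/-- A sequence `z` is *minimal* if the closure of its shift-orbit is a minimal
dynamical system under the shift, i.e. every point of this closure has dense
forward orbit in it. -/
def IsMinimalSeq {X : Type*} [TopologicalSpace X] (z : ℕ → X) : Prop :=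
  ∀ w ∈ shiftOrbitClosure z, shiftOrbitClosure z ⊆ shiftOrbitClosure w

/-- The 2-Toeplitz sequence of `B = (b 0, b 1, …)` (all sequences 0-indexed):
its `n`-th term is `b p` where `2 ^ p` exactly divides `n + 1`; equivalently the
term at (1-indexed) position `j` is `b_i` for all `j ≡ 2^(i-1) (mod 2^i)`. -/
def toeplitz2 {X : Type*} (b : ℕ → X) : ℕ → X :=
  fun n => b (padicValNat 2 (n + 1))

/-- Prepend a term to a sequence. -/
def consSeq {X : Type*} (c : X) (z : ℕ → X) : ℕ → X
  | 0 => c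
  | n + 1 => z n

/-- Flatten a sequence of pairs into a sequence, each pair contributing its two
coordinates as consecutive terms. -/
def flattenPairs {Y : Type*} (b : ℕ → Y × Y) : ℕ → Y := fun n =>
  if n % 2 = 0 then (b (n / 2)).1 else (b (n / 2)).2

/-! ### Auxiliary lemmas -/

local instance : Fact (Nat.Prime 2) := ⟨Nat.prime_two⟩

lemma val2_add_eq_right {y s : ℕ} (hs : s ≠ 0)
    (hy : y ≠ 0) (h : padicValNat 2 s < padicValNat 2 y) :
    padicValNat 2 (y + s) = padicValNat 2 s := by
  have hys : y + s ≠ 0 := by omega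
  apply le_antisymm
  · by_contra hlt
    push_neg at hlt
    have h1 : 2 ^ (padicValNat 2 s + 1) ∣ y + s :=
      (padicValNat_dvd_iff_le hys).2 hlt
    have h2 : 2 ^ (padicValNat 2 s + 1) ∣ y :=
      (padicValNat_dvd_iff_le hy).2 h
    have h3 : 2 ^ (padicValNat 2 s + 1) ∣ s := by
      have := Nat.dvd_sub h1 h2
      simpa using this
    have := (padicValNat_dvd_iff_le hs).1 h3
    omega
  · refine (padicValNat_dvd_iff_le hys).1 (Nat.dvd_add ?_ pow_padicValNat_dvd)
    exact (padicValNat_dvd_iff_le hy).2 h.le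

lemma val2_of_mod {n m : ℕ} (h : n % 2 ^ (m + 1) = 2 ^ m - 1) :
    padicValNat 2 (n + 1) = m := by
  have hp : 0 < 2 ^ m := Nat.pow_pos (n := m) (by norm_num)
  have hd := Nat.div_add_mod n (2 ^ (m + 1))
  set q := n / 2 ^ (m + 1) with hq
  have hn1 : n + 1 = 2 ^ m * (2 * q + 1) := by
    rw [h] at hd
    have h2 : n + 1 = 2 ^ (m + 1) * q + 2 ^ m := by omega
    rw [h2, pow_succ]
    ring
  rw [hn1, padicValNat.mul (by positivity) (by omega), padicValNat.prime_pow]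
  have : padicValNat 2 (2 * q + 1) = 0 :=
    padicValNat.eq_zero_of_not_dvd (by omega)
  omega

lemma val2_shift {n m s : ℕ} (hval : padicValNat 2 (n + 1) = m)
    (hs1 : 1 ≤ s) (hs2 : s < 2 ^ m) :
    padicValNat 2 (n + 1 + s) = padicValNat 2 s := by
  have hs : s ≠ 0 := by omega
  have hlt : padicValNat 2 s < m := by
    by_contra hge
    push_neg at hge
    have hdvd : 2 ^ m ∣ s := (padicValNat_dvd_iff_le hs).2 hge
    have := Nat.le_of_dvd (by omega) hdvd
    omega
  exact val2_add_eq_right hs (by omega) (by omega)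

lemma flat_head1 (v : ℕ → I × I) (n : ℕ) :
    flattenPairs (toeplitz2 v) (2 * n) = (v (padicValNat 2 (n + 1))).1 := by
  have h1 : 2 * n % 2 = 0 := by omega
  have h2 : 2 * n / 2 = n := by omega
  simp [flattenPairs, toeplitz2, h1, h2]

lemma flat_head2 (v : ℕ → I × I) (n : ℕ) :
    flattenPairs (toeplitz2 v) (2 * n + 1) = (v (padicValNat 2 (n + 1))).2 := by
  have h1 : (2 * n + 1) % 2 = 1 := by omega
  have h2 : (2 * n + 1) / 2 = n := by omega
  simp [flattenPairs, toeplitz2, h1, h2]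

lemma flat_rec (v : ℕ → I × I) {m n i : ℕ} (hval : padicValNat 2 (n + 1) = m)
    (hi : i + 2 < 2 ^ (m + 1)) :
    flattenPairs (toeplitz2 v) (2 * (n + 1) + i) = flattenPairs (toeplitz2 v) i := by
  have e1 : (2:ℕ) ^ (m + 1) = 2 * 2 ^ m := by rw [pow_succ]; ring
  have hmod : (2 * (n + 1) + i) % 2 = i % 2 := by omega
  have hdiv : (2 * (n + 1) + i) / 2 = n + 1 + i / 2 := by omega
  have hT : toeplitz2 v (n + 1 + i / 2) = toeplitz2 v (i / 2) := by
    unfold toeplitz2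
    have harith : n + 1 + i / 2 + 1 = n + 1 + (i / 2 + 1) := by omega
    rw [harith, val2_shift hval (by omega) (by omega)]
  unfold flattenPairs
  rw [hmod, hdiv, hT]

lemma shiftSeq_iterate {X : Type*} (k : ℕ) :
    ∀ (z : ℕ → X) (n : ℕ), shiftSeq^[k] z n = z (n + k) := by
  induction k with
  | zero => intro z n; rfl
  | succ k ih =>
    intro z n
    rw [Function.iterate_succ_apply, ih (shiftSeq z) n]
    rfl

lemma mem_orbitClosure_iff (z x : ℕ → I) :
    x ∈ shiftOrbitClosure z ↔
      ∀ ε : ℝ, 0 < ε → ∀ L : ℕ, ∃ k, ∀ j < L, dist (x j) (z (j + k)) < ε := by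
  unfold shiftOrbitClosure
  constructor
  · intro hx ε hε L
    have hU : IsOpen {y : ℕ → I | ∀ j < L, dist (x j) (y j) < ε} := by
      have heq : {y : ℕ → I | ∀ j < L, dist (x j) (y j) < ε}
          = ⋂ j ∈ Finset.range L, (fun y : ℕ → I => y j) ⁻¹' Metric.ball (x j) ε := by
        ext y
        simp [Metric.mem_ball, dist_comm]
      rw [heq]
      exact isOpen_biInter_finset fun j _ => Metric.isOpen_ball.preimage (continuous_apply j)
    have hmem : x ∈ {y : ℕ → I | ∀ j < L, dist (x j) (y j) < ε} := fun j _ => by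
      simpa using hε
    obtain ⟨y, hy1, hy2⟩ := mem_closure_iff.1 hx _ hU hmem
    obtain ⟨k, rfl⟩ := hy2
    exact ⟨k, fun j hj => by simpa [shiftSeq_iterate] using hy1 j hj⟩
  · intro h
    choose k hk using fun n : ℕ => h (1 / ((n : ℝ) + 1)) (by positivity) n
    have htend : Filter.Tendsto (fun n => shiftSeq^[k n] z) Filter.atTop (𝓝 x) := by
      rw [tendsto_pi_nhds]
      intro j
      rw [Metric.tendsto_atTop]
      intro ε hε
      obtain ⟨N0, hN0⟩ := exists_nat_gt (1 / ε)
      refine ⟨max N0 (j + 1), fun n hn => ?_⟩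
      have hj : j < n := lt_of_lt_of_le (Nat.lt_succ_self j) (le_trans (le_max_right _ _) hn)
      have h1 := hk n j hj
      have hn0 : (N0 : ℝ) ≤ (n : ℝ) := by
        exact_mod_cast le_trans (le_max_left _ _) hn
      have hlt : 1 / ((n : ℝ) + 1) < ε := by
        rw [div_lt_iff₀ (by positivity)]
        rw [div_lt_iff₀ hε] at hN0
        nlinarith
      rw [shiftSeq_iterate, dist_comm]
      exact lt_trans h1 hlt
    exact mem_closure_of_tendsto htend
      (Filter.Eventually.of_forall fun n => Set.mem_range_self _)

lemma isMinimalSeq_of_unif (z : ℕ → I)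
    (h : ∀ ε : ℝ, 0 < ε → ∀ L : ℕ, ∃ N, ∀ s, ∃ t, s ≤ t ∧ t ≤ s + N ∧
      ∀ j < L, dist (z (t + j)) (z j) < ε) :
    IsMinimalSeq z := by
  intro w hw
  have hz : z ∈ shiftOrbitClosure w := by
    rw [mem_orbitClosure_iff]
    intro ε hε L
    obtain ⟨N, hN⟩ := h (ε / 2) (by positivity) L
    rw [mem_orbitClosure_iff] at hw
    obtain ⟨n, hn⟩ := hw (ε / 2) (by positivity) (L + N)
    obtain ⟨t, ht1, ht2, ht3⟩ := hN n
    refine ⟨t - n, fun j hj => ?_⟩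
    have hkj : j + (t - n) < L + N := by omega
    have h1 := hn (j + (t - n)) hkj
    have he : j + (t - n) + n = t + j := by omega
    rw [he] at h1
    have h2 := ht3 j hj
    calc dist (z j) (w (j + (t - n)))
        ≤ dist (z j) (z (t + j)) + dist (z (t + j)) (w (j + (t - n))) :=
          dist_triangle _ _ _
      _ < ε / 2 + ε / 2 := by
          apply add_lt_add
          · rw [dist_comm]; exact h2
          · rw [dist_comm]; exact h1
      _ = ε := by ring
  have hS : ∀ u ∈ shiftOrbitClosure w, shiftSeq u ∈ shiftOrbitClosure w := by
    intro u hu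
    have hc : Continuous (shiftSeq : (ℕ → I) → (ℕ → I)) :=
      continuous_pi fun n => continuous_apply (n + 1)
    have himg := image_closure_subset_closure_image
      (s := Set.range fun k => shiftSeq^[k] w) hc
    have hsub : shiftSeq '' (Set.range fun k => shiftSeq^[k] w) ⊆
        Set.range fun k => shiftSeq^[k] w := by
      rintro _ ⟨_, ⟨j, rfl⟩, rfl⟩
      refine ⟨j + 1, ?_⟩
      show shiftSeq^[j + 1] w = shiftSeq (shiftSeq^[j] w)
      rw [Function.iterate_succ_apply']
    exact closure_mono hsub (himg ⟨u, hu, rfl⟩)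
  have horb : ∀ j, shiftSeq^[j] z ∈ shiftOrbitClosure w := by
    intro j
    induction j with
    | zero => exact hz
    | succ j ih =>
      rw [Function.iterate_succ_apply']
      exact hS _ ih
  exact closure_minimal (Set.range_subset_iff.2 horb) isClosed_closure

lemma exists_index_near (v : ℕ → I × I)
    (hrange : Set.range v =
      {x : I × I | (∃ q : ℚ, (q : ℝ) = (x.1 : ℝ)) ∧ ∃ q : ℚ, (q : ℝ) = (x.2 : ℝ)})
    (p : I × I) {ε : ℝ} (hε : 0 < ε) (M : ℕ) :
    ∃ m, M ≤ m ∧ dist (v m) p < ε := by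
  have hc0 : (0:ℝ) ≤ (p.1 : ℝ) := p.1.2.1
  have hc1 : (p.1 : ℝ) ≤ 1 := p.1.2.2
  have hd0 : (0:ℝ) ≤ (p.2 : ℝ) := p.2.2.1
  have hd1 : (p.2 : ℝ) ≤ 1 := p.2.2.2
  have hlt1 : max 0 ((p.1 : ℝ) - ε) < min 1 ((p.1 : ℝ) + ε) :=
    max_lt (lt_min one_pos (by linarith)) (lt_min (by linarith) (by linarith))
  have hlt2 : max 0 ((p.2 : ℝ) - ε) < min 1 ((p.2 : ℝ) + ε) :=
    max_lt (lt_min one_pos (by linarith)) (lt_min (by linarith) (by linarith))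
  obtain ⟨r1, hr1a, hr1b⟩ := exists_rat_btwn hlt1
  obtain ⟨r2, hr2a, hr2b⟩ := exists_rat_btwn hr1b
  obtain ⟨s, hsa, hsb⟩ := exists_rat_btwn hlt2
  have hq : ∀ q : ℚ, q ∈ Set.Ioo r1 r2 →
      (0:ℝ) ≤ (q : ℝ) ∧ (q : ℝ) ≤ 1 ∧ |(q : ℝ) - (p.1 : ℝ)| < ε := by
    intro q hqm
    have h1 : (r1 : ℝ) < (q : ℝ) := by exact_mod_cast hqm.1
    have h2 : (q : ℝ) < (r2 : ℝ) := by exact_mod_cast hqm.2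
    have hA : (0:ℝ) ≤ max 0 ((p.1 : ℝ) - ε) := le_max_left _ _
    have hB : min 1 ((p.1 : ℝ) + ε) ≤ 1 := min_le_left _ _
    have hC : (p.1 : ℝ) - ε ≤ max 0 ((p.1 : ℝ) - ε) := le_max_right _ _
    have hD : min 1 ((p.1 : ℝ) + ε) ≤ (p.1 : ℝ) + ε := min_le_right _ _
    refine ⟨by linarith, by linarith, ?_⟩
    rw [abs_sub_lt_iff]
    constructor <;> linarith
  have hs' : (0:ℝ) ≤ (s : ℝ) ∧ (s : ℝ) ≤ 1 ∧ |(s : ℝ) - (p.2 : ℝ)| < ε := by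
    have hA : (0:ℝ) ≤ max 0 ((p.2 : ℝ) - ε) := le_max_left _ _
    have hB : min 1 ((p.2 : ℝ) + ε) ≤ 1 := min_le_left _ _
    have hC : (p.2 : ℝ) - ε ≤ max 0 ((p.2 : ℝ) - ε) := le_max_right _ _
    have hD : min 1 ((p.2 : ℝ) + ε) ≤ (p.2 : ℝ) + ε := min_le_right _ _
    refine ⟨by linarith, by linarith, ?_⟩
    rw [abs_sub_lt_iff]
    constructor <;> linarith
  have hex : ∀ q : Set.Ioo r1 r2, ∃ m : ℕ,
      ((v m).1 : ℝ) = ((q : ℚ) : ℝ) ∧ ((v m).2 : ℝ) = (s : ℝ) := by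
    intro q
    obtain ⟨hq0, hq1, _⟩ := hq q q.2
    obtain ⟨hs0, hs1, _⟩ := hs'
    have hmem : ((⟨((q : ℚ) : ℝ), hq0, hq1⟩ : I), (⟨(s : ℝ), hs0, hs1⟩ : I)) ∈
        Set.range v := by
      rw [hrange]
      exact ⟨⟨q, rfl⟩, ⟨s, rfl⟩⟩
    obtain ⟨m, hm⟩ := hmem
    exact ⟨m, by rw [hm], by rw [hm]⟩
  choose f hf1 hf2 using hex
  have hr12 : r1 < r2 := by exact_mod_cast hr2a
  haveI : Infinite (Set.Ioo r1 r2) := Set.Ioo.infinite hr12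
  have hT : {m : ℕ | dist (v m) p < ε}.Infinite := by
    apply Set.infinite_of_injective_forall_mem (f := f)
    · intro q q' hqq
      have hval : ((v (f q)).1 : ℝ) = ((v (f q')).1 : ℝ) := by rw [hqq]
      rw [hf1 q, hf1 q'] at hval
      have : (q : ℚ) = (q' : ℚ) := by exact_mod_cast hval
      exact Subtype.ext this
    · intro q
      obtain ⟨_, _, hqc⟩ := hq q q.2
      obtain ⟨_, _, hsd⟩ := hs'
      rw [Set.mem_setOf_eq, Prod.dist_eq, max_lt_iff]
      constructor
      · rw [Subtype.dist_eq, Real.dist_eq, hf1]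
        exact hqc
      · rw [Subtype.dist_eq, Real.dist_eq, hf2]
        exact hsd
  obtain ⟨m, hm1, hm2⟩ := hT.exists_gt M
  exact ⟨m, hm2.le, hm1⟩

/-! ### Main theorem -/

/-- If `v` is an enumeration of `ℚ² ∩ [0,1]²`, `b̄` is its 2-Toeplitz sequence and
`ā ∈ [0,1]ᴺ` is obtained from `b̄` by replacing each pair by its two coordinates as
consecutive terms, then `(c, d, a₁, a₂, …)` is minimal for all `c, d ∈ [0,1]`. -/
theorem cons_cons_flatten_toeplitz2_of_rat_sq_enumeration_isMinimalSeq
    (v : ℕ → I × I) (hinj : Function.Injective v)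
    (hrange : Set.range v =
      {x : I × I | (∃ q : ℚ, (q : ℝ) = (x.1 : ℝ)) ∧ ∃ q : ℚ, (q : ℝ) = (x.2 : ℝ)})
    (c d : I) :
    IsMinimalSeq (consSeq c (consSeq d (flattenPairs (toeplitz2 v)))) := by
  set a : ℕ → I := flattenPairs (toeplitz2 v) with ha
  set z : ℕ → I := consSeq c (consSeq d a) with hzdef
  have hz2 : ∀ x : ℕ, z (x + 2) = a x := fun x => rfl
  apply isMinimalSeq_of_unif
  intro ε hε L
  obtain ⟨m, hmL, hmd⟩ := exists_index_near v hrange (c, d) hε L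
  have hpm : (0:ℕ) < 2 ^ m := Nat.pow_pos (n := m) (by norm_num)
  have e1 : (2:ℕ) ^ (m + 1) = 2 * 2 ^ m := by rw [pow_succ]; ring
  have e2 : (2:ℕ) ^ (m + 2) = 4 * 2 ^ m := by rw [pow_succ, pow_succ]; ring
  have e3 : (2:ℕ) ^ (m + 3) = 8 * 2 ^ m := by rw [pow_succ, pow_succ, pow_succ]; ring
  have hm2 : m < 2 ^ m := Nat.lt_two_pow_self (n := m)
  refine ⟨2 ^ (m + 3), fun s0 => ?_⟩
  set D : ℕ := s0 / 2 ^ (m + 2) with hD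
  set n : ℕ := 2 ^ m - 1 + 2 ^ (m + 1) * (D + 1) with hn
  have hdm := Nat.div_add_mod s0 (2 ^ (m + 2))
  have hmodlt : s0 % 2 ^ (m + 2) < 2 ^ (m + 2) := Nat.mod_lt _ (by positivity)
  have hE1 : 2 ^ (m + 1) * (D + 1) = 2 * (2 ^ m * D) + 2 * 2 ^ m := by
    rw [pow_succ]; ring
  have hE2 : 2 ^ (m + 2) * D = 4 * (2 ^ m * D) := by
    rw [pow_succ, pow_succ]; ring
  have hnm : n % 2 ^ (m + 1) = 2 ^ m - 1 := by
    rw [hn, Nat.add_mul_mod_self_left]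
    exact Nat.mod_eq_of_lt (by omega)
  have hval : padicValNat 2 (n + 1) = m := val2_of_mod hnm
  have hnval : n = 2 ^ m - 1 + (2 * (2 ^ m * D) + 2 * 2 ^ m) := by rw [hn, hE1]
  have hdm' : 4 * (2 ^ m * D) + s0 % 2 ^ (m + 2) = s0 := by rw [← hE2]; exact hdm
  refine ⟨2 * n + 2, by omega, by omega, ?_⟩
  intro j hj
  have hjm : j < 2 ^ (m + 1) := by omega
  -- extract the two coordinate bounds from hmd
  rw [Prod.dist_eq, max_lt_iff] at hmd
  obtain ⟨hmd1, hmd2⟩ := hmd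
  match j with
  | 0 =>
    have hzt : z (2 * n + 2 + 0) = (v m).1 := by
      have : 2 * n + 2 + 0 = 2 * n + 2 := by ring
      rw [this, hz2 (2 * n), ha, flat_head1 v n, hval]
    have hz0 : z 0 = c := rfl
    rw [hzt, hz0]
    exact hmd1
  | 1 =>
    have hzt : z (2 * n + 2 + 1) = (v m).2 := by
      have : 2 * n + 2 + 1 = (2 * n + 1) + 2 := by ring
      rw [this, hz2 (2 * n + 1), ha, flat_head2 v n, hval]
    have hz1 : z 1 = d := rfl
    rw [hzt, hz1]
    exact hmd2
  | (i + 2) =>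
    have hzt : z (2 * n + 2 + (i + 2)) = z (i + 2) := by
      have harith : 2 * n + 2 + (i + 2) = (2 * (n + 1) + i) + 2 := by ring
      rw [harith, hz2 (2 * (n + 1) + i), hz2 i, ha]
      exact flat_rec v hval (by omega)
    rw [hzt, dist_self]
    exact hε
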